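/- Let G be a claw-free graph (no induced subgraph isomorphic to K_{1,3}), and let S, T be disjoint stable (independent) sets of vertices of G such that the subgraph induced by S ∪ T is connected. Then ||S| - |T|| ≤ 1. -/

import Mathlib

open SimpleGraph

/-- A graph is claw-free if it has no induced subgraph isomorphic to the claw `K_{1,3}`:
there is no injective map `f : Fin 4 → V` such that `f 0` is adjacent to `f 1, f 2, f 3`
and these are the only adjacencies among the four vertices. -/
def ClawFree {V : Type*} (G : SimpleGraph V) : Prop :=
  ¬ ∃ f : Fin 4 → V, Function.Injective f ∧
      ∀ i j : Fin 4, G.Adj (f i) (f j) ↔ ((i = 0 ∧ j ≠ 0) ∨ (j = 0 ∧ i ≠ 0))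

/-- In a claw-free graph, a vertex outside a stable set has at most 2 neighbors in it. -/
lemma clawfree_deg_le_two {V : Type*} [DecidableEq V] (G : SimpleGraph V)
    [DecidableRel G.Adj] (hG : ClawFree G)
    (A : Finset V) (hA : ∀ u ∈ A, ∀ v ∈ A, ¬ G.Adj u v) (s : V) (hs : s ∉ A) :
    (A.filter (fun t => G.Adj s t)).card ≤ 2 := by
  by_contra h
  push_neg at h
  obtain ⟨B, hBsub, hBcard⟩ := Finset.exists_subset_card_eq h
  obtain ⟨a, b, c, hab, hac, hbc, rfl⟩ := Finset.card_eq_three.mp hBcard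
  have ha := hBsub (by simp : a ∈ ({a,b,c} : Finset V))
  have hb := hBsub (by simp : b ∈ ({a,b,c} : Finset V))
  have hc := hBsub (by simp : c ∈ ({a,b,c} : Finset V))
  simp only [Finset.mem_filter] at ha hb hc
  apply hG
  refine ⟨![s, a, b, c], ?_, ?_⟩
  · intro i j hij
    have hsa : s ≠ a := fun h => hs (h ▸ ha.1)
    have hsb : s ≠ b := fun h => hs (h ▸ hb.1)
    have hsc : s ≠ c := fun h => hs (h ▸ hc.1)
    fin_cases i <;> fin_cases j <;> simp_all
  · intro i j
    have h1 := ha.2; have h2 := hb.2; have h3 := hc.2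
    have h1' := G.adj_symm h1; have h2' := G.adj_symm h2; have h3' := G.adj_symm h3
    have nab := hA a ha.1 b hb.1
    have nac := hA a ha.1 c hc.1
    have nbc := hA b hb.1 c hc.1
    have nba := hA b hb.1 a ha.1
    have nca := hA c hc.1 a ha.1
    have ncb := hA c hc.1 b hb.1
    fin_cases i <;> fin_cases j <;>
      simp_all [G.irrefl]

lemma clawfree_count_le {V : Type*} [DecidableEq V] (G : SimpleGraph V)
    [DecidableRel G.Adj] (hG : ClawFree G)
    (A B : Finset V) (hdisj : Disjoint A B) (hB : ∀ u ∈ B, ∀ v ∈ B, ¬ G.Adj u v) :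
    ((A ×ˢ B).filter (fun p => G.Adj p.1 p.2)).card ≤ 2 * A.card := by
  set R := (A ×ˢ B).filter (fun p => G.Adj p.1 p.2) with hR
  have hmap : ∀ p ∈ R, p.1 ∈ A := by
    intro p hp
    simp only [hR, Finset.mem_filter, Finset.mem_product] at hp
    exact hp.1.1
  rw [Finset.card_eq_sum_card_fiberwise hmap]
  rw [mul_comm, ← smul_eq_mul]
  apply Finset.sum_le_card_nsmul
  intro s hsA
  calc (R.filter (fun p => p.1 = s)).card
      ≤ (B.filter (fun t => G.Adj s t)).card := by
        apply Finset.card_le_card_of_injOn (fun p => p.2)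
        · intro p hp
          simp only [hR, Finset.mem_coe, Finset.mem_filter, Finset.mem_product] at hp ⊢
          exact ⟨hp.1.1.2, hp.2 ▸ hp.1.2⟩
        · intro p hp q hq hpq
          simp only [hR, Finset.mem_coe, Finset.mem_filter] at hp hq
          exact Prod.ext (hp.2.trans hq.2.symm) hpq
    _ ≤ 2 := clawfree_deg_le_two G hG B hB s (Finset.disjoint_left.mp hdisj hsA)

theorem clawfree_bipartite_balanced {V : Type*} [Fintype V] [DecidableEq V]
    (G : SimpleGraph V) (hG : ClawFree G)
    (S T : Finset V) (hdisj : Disjoint S T)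
    (hS : ∀ u ∈ S, ∀ v ∈ S, ¬ G.Adj u v)
    (hT : ∀ u ∈ T, ∀ v ∈ T, ¬ G.Adj u v)
    (hconn : (G.induce ((S : Set V) ∪ (T : Set V))).Connected) :
    |(S.card : ℤ) - (T.card : ℤ)| ≤ 1 := by
  classical
  set U : Set V := (S : Set V) ∪ (T : Set V) with hU
  set H := G.induce U with hH
  set R := (S ×ˢ T).filter (fun p => G.Adj p.1 p.2) with hRdef
  -- upper bounds
  have hB1 : R.card ≤ 2 * S.card := clawfree_count_le G hG S T hdisj hT
  have hB2 : R.card ≤ 2 * T.card := by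
    have hswap : R.card = ((T ×ˢ S).filter (fun p => G.Adj p.1 p.2)).card := by
      apply Finset.card_bij (fun p _ => Prod.swap p)
      · intro p hp
        simp only [hRdef, Finset.mem_filter, Finset.mem_product] at hp ⊢
        exact ⟨⟨hp.1.2, hp.1.1⟩, G.adj_symm hp.2⟩
      · intro p _ q _ h
        exact Prod.swap_injective h
      · intro p hp
        refine ⟨Prod.swap p, ?_, by simp⟩
        simp only [hRdef, Finset.mem_filter, Finset.mem_product] at hp ⊢
        exact ⟨⟨hp.1.2, hp.1.1⟩, G.adj_symm hp.2⟩
    rw [hswap]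
    exact clawfree_count_le G hG T S hdisj.symm hS
  -- lower bound : connectivity
  have hC : S.card + T.card ≤ R.card + 1 := by
    obtain ⟨r⟩ := hconn.nonempty
    have key : ∀ v : U, v ≠ r → ∃ u : U, H.Adj v u ∧ H.dist u r < H.dist v r := by
      intro v hv
      have hreach : H.Reachable v r := hconn.preconnected v r
      have hd : H.dist v r ≠ 0 :=
        SimpleGraph.dist_ne_zero_iff_ne_and_reachable.mpr ⟨hv, hreach⟩
      obtain ⟨p, hp⟩ := hreach.exists_walk_length_eq_dist
      cases p with
      | nil => exact absurd rfl hv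
      | cons hadj q =>
        refine ⟨_, hadj, ?_⟩
        have h1 : H.dist _ r ≤ q.length := SimpleGraph.dist_le q
        have h2 : q.length + 1 = H.dist v r := by
          simpa using hp
        omega
    choose par hpadj hpdist using key
    -- injection from U \ {r} into R
    set F : {v : U // v ≠ r} → V × V := fun x =>
      if ((x.1 : V) ∈ S) then ((x.1 : V), (par x.1 x.2 : V))
      else ((par x.1 x.2 : V), (x.1 : V)) with hF
    have hadjG : ∀ (v : U) (hv : v ≠ r), G.Adj (v : V) ((par v hv : V)) := by
      intro v hv
      have := hpadj v hv
      rw [hH] at this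
      exact this
    have hsides : ∀ (v : U) (hv : v ≠ r),
        ((v : V) ∈ S ∧ ((par v hv : V)) ∈ T) ∨ ((v : V) ∈ T ∧ ((par v hv : V)) ∈ S) := by
      intro v hv
      have hvU : (v : V) ∈ U := v.2
      have huU : ((par v hv : V)) ∈ U := (par v hv).2
      have hadj := hadjG v hv
      simp only [hU, Set.mem_union, Finset.mem_coe] at hvU huU
      rcases hvU with hvS | hvT
      · rcases huU with huS | huT
        · exact absurd hadj (hS _ hvS _ huS)
        · exact Or.inl ⟨hvS, huT⟩
      · rcases huU with huS | huT
        · exact Or.inr ⟨hvT, huS⟩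
        · exact absurd hadj (hT _ hvT _ huT)
    have hmem : ∀ x, F x ∈ R := by
      intro x
      rcases hsides x.1 x.2 with ⟨h1, h2⟩ | ⟨h1, h2⟩
      · simp only [hF, if_pos h1, hRdef, Finset.mem_filter, Finset.mem_product]
        exact ⟨⟨h1, h2⟩, hadjG x.1 x.2⟩
      · have hnS : (x.1 : V) ∉ S := fun h => Finset.disjoint_left.mp hdisj h h1
        simp only [hF, if_neg hnS, hRdef, Finset.mem_filter, Finset.mem_product]
        exact ⟨⟨h2, h1⟩, G.adj_symm (hadjG x.1 x.2)⟩
    have hinj : Function.Injective F := by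
      intro x y hxy
      have hx := hsides x.1 x.2
      have hy := hsides y.1 y.2
      by_cases hxS : (x.1 : V) ∈ S <;> by_cases hyS : (y.1 : V) ∈ S
      · simp only [hF, if_pos hxS, if_pos hyS, Prod.mk.injEq] at hxy
        exact Subtype.ext (Subtype.ext hxy.1)
      · simp only [hF, if_pos hxS, if_neg hyS, Prod.mk.injEq] at hxy
        -- x.1 = par y, par x = y.1
        have e1 : x.1 = par y.1 y.2 := Subtype.ext hxy.1
        have e2 : par x.1 x.2 = y.1 := Subtype.ext hxy.2
        have d1 := hpdist x.1 x.2
        have d2 := hpdist y.1 y.2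
        rw [e2] at d1
        rw [← e1] at d2
        omega
      · simp only [hF, if_neg hxS, if_pos hyS, Prod.mk.injEq] at hxy
        have e1 : par x.1 x.2 = y.1 := Subtype.ext hxy.1
        have e2 : x.1 = par y.1 y.2 := Subtype.ext hxy.2
        have d1 := hpdist x.1 x.2
        have d2 := hpdist y.1 y.2
        rw [e1] at d1
        rw [← e2] at d2
        omega
      · simp only [hF, if_neg hxS, if_neg hyS, Prod.mk.injEq] at hxy
        exact Subtype.ext (Subtype.ext hxy.2)
    -- counting
    have hcard1 : Fintype.card {v : U // v ≠ r} ≤ R.card := by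
      have := Fintype.card_le_of_injective
        (fun x => (⟨F x, hmem x⟩ : {p // p ∈ R}))
        (fun a b h => hinj (congrArg Subtype.val h))
      simpa [Fintype.card_coe] using this
    have hcard2 : Fintype.card {v : U // v ≠ r} = Fintype.card U - 1 := by
      have : Fintype.card {v : U // ¬ (v = r)} = Fintype.card U - Fintype.card {v : U // v = r} :=
        Fintype.card_subtype_compl _
      rw [Fintype.card_subtype_eq] at this
      convert this using 2
    have hcard3 : Fintype.card U = S.card + T.card := by
      have hUeq : U = ((S ∪ T : Finset V) : Set V) := by
        rw [hU, Finset.coe_union]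
      rw [Fintype.card_congr (Equiv.setCongr hUeq)]
      simp [Finset.card_union_of_disjoint hdisj]
    have hpos : 1 ≤ Fintype.card U := Fintype.card_pos_iff.mpr ⟨r⟩
    omega
  rw [abs_le]
  omega
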